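/- Let R be a commutative ring and let f(x,y) = Σ_{k≥0} y^{C(k,2)} x^k ∈ R[[x,y]] be the partial theta function. There exists a unique formal power series x_0(y) ∈ R[[y]] with constant term -1 such that f(x_0(y), y) = 0, and its first coefficients satisfy -x_0(y) = 1 + y + 2y^2 + 4y^3 + 9y^4 + O(y^5) when R = ℤ. -/

import Mathlib

open PowerSeries

lemma coeff_pow_congr {R : Type} [CommRing R] {x y : PowerSeries R} {j : ℕ}
    (h : ∀ i ≤ j, coeff (R := R) i x = coeff (R := R) i y) (k : ℕ) :
    ∀ i ≤ j, coeff (R := R) i (x ^ k) = coeff (R := R) i (y ^ k) := by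
  induction k with
  | zero => simp
  | succ k ih =>
    intro i hi
    rw [pow_succ, pow_succ, coeff_mul, coeff_mul]
    apply Finset.sum_congr rfl
    intro p hp
    replace hp : p.1 + p.2 = i := Finset.HasAntidiagonal.mem_antidiagonal.mp hp
    rw [ih p.1 (by omega), h p.2 (by omega)]

lemma term_congr {R : Type} [CommRing R] {x y : PowerSeries R} {m : ℕ}
    (h : ∀ i ≤ m, coeff (R := R) i x = coeff (R := R) i y) {k : ℕ} (hk : k ≠ 1) :
    coeff (R := R) (m+1) ((X : PowerSeries R) ^ (k.choose 2) * x ^ k)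
      = coeff (R := R) (m+1) ((X : PowerSeries R) ^ (k.choose 2) * y ^ k) := by
  match k with
  | 0 => simp
  | 1 => exact absurd rfl hk
  | (j+2) =>
    have hc : 1 ≤ (j+2).choose 2 := Nat.choose_pos (by omega)
    rw [mul_comm ((X : PowerSeries R) ^ _), mul_comm ((X : PowerSeries R) ^ _),
      coeff_mul_X_pow', coeff_mul_X_pow']
    split_ifs with hle
    · exact coeff_pow_congr h _ _ (by omega)
    · rfl

noncomputable def seqA (R : Type) [CommRing R] : ℕ → R
  | 0 => -1
  | (m+1) => -(∑ k ∈ (Finset.range (m+3)).erase 1,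
      coeff (R := R) (m+1) ((X : PowerSeries R) ^ (k.choose 2) *
        (PowerSeries.mk (fun i => if _ : i ≤ m then seqA R i else 0)) ^ k))
  termination_by m => m
  decreasing_by omega

lemma seqA_satisfies (R : Type) [CommRing R] (m : ℕ) :
    ∑ k ∈ Finset.range (m + 2),
      coeff (R := R) m ((X : PowerSeries R) ^ (k.choose 2) * (PowerSeries.mk (seqA R)) ^ k) = 0 := by
  cases m with
  | zero =>
    rw [Finset.sum_range_succ, Finset.sum_range_one]
    simp [seqA]
  | succ m =>
    have h1 : (1 : ℕ) ∈ Finset.range (m+3) := by simp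
    rw [← Finset.add_sum_erase _ _ h1]
    have hterm : ∀ k ∈ (Finset.range (m+3)).erase 1,
        coeff (R := R) (m+1) ((X : PowerSeries R) ^ (k.choose 2) * (PowerSeries.mk (seqA R)) ^ k)
          = coeff (R := R) (m+1) ((X : PowerSeries R) ^ (k.choose 2) *
              (PowerSeries.mk (fun i => if _ : i ≤ m then seqA R i else 0)) ^ k) := by
      intro k hk
      have hk1 : k ≠ 1 := (Finset.mem_erase.mp hk).1
      exact term_congr (fun i hi => by simp [coeff_mk, hi]) hk1
    rw [Finset.sum_congr rfl hterm]
    have : coeff (R := R) (m+1) ((X : PowerSeries R) ^ ((1:ℕ).choose 2) * (PowerSeries.mk (seqA R)) ^ 1)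
        = seqA R (m+1) := by simp
    rw [this, seqA]
    ring

theorem partial_theta_leading_root :
    (∀ (R : Type) [CommRing R], ∃! x₀ : PowerSeries R,
      PowerSeries.constantCoeff (R := R) x₀ = -1 ∧
      ∀ m : ℕ, ∑ k ∈ Finset.range (m + 2),
        (PowerSeries.coeff (R := R) m) ((PowerSeries.X : PowerSeries R) ^ (k.choose 2) * x₀ ^ k) = 0) ∧
    (∀ x₀ : PowerSeries ℤ,
      (PowerSeries.constantCoeff (R := ℤ) x₀ = -1 ∧
        ∀ m : ℕ, ∑ k ∈ Finset.range (m + 2),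
          (PowerSeries.coeff (R := ℤ) m) ((PowerSeries.X : PowerSeries ℤ) ^ (k.choose 2) * x₀ ^ k) = 0) →
      PowerSeries.coeff (R := ℤ) 0 (-x₀) = 1 ∧ PowerSeries.coeff (R := ℤ) 1 (-x₀) = 1 ∧
        PowerSeries.coeff (R := ℤ) 2 (-x₀) = 2 ∧ PowerSeries.coeff (R := ℤ) 3 (-x₀) = 4 ∧
        PowerSeries.coeff (R := ℤ) 4 (-x₀) = 9) := by
  constructor
  · intro R _
    refine ⟨PowerSeries.mk (seqA R), ⟨?_, seqA_satisfies R⟩, ?_⟩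
    · simp [← coeff_zero_eq_constantCoeff, seqA]
    · rintro y ⟨hy0, hy⟩
      ext n
      induction n using Nat.strong_induction_on with
      | _ n ih =>
        cases n with
        | zero =>
          simp only [coeff_zero_eq_constantCoeff, hy0]
          rw [← coeff_zero_eq_constantCoeff]
          simp [seqA]
        | succ m =>
          have hIH : ∀ i ≤ m, coeff (R := R) i y = coeff (R := R) i (PowerSeries.mk (seqA R)) :=
            fun i hi => ih i (by omega)
          have h1 : (1 : ℕ) ∈ Finset.range (m+3) := by simp
          have e1 := hy (m+1)
          have e2 := seqA_satisfies R (m+1)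
          rw [← Finset.add_sum_erase _ _ h1] at e1 e2
          have hterm : ∀ k ∈ (Finset.range (m+3)).erase 1,
              coeff (R := R) (m+1) ((X : PowerSeries R) ^ (k.choose 2) * y ^ k)
                = coeff (R := R) (m+1) ((X : PowerSeries R) ^ (k.choose 2) * (PowerSeries.mk (seqA R)) ^ k) :=
            fun k hk => term_congr hIH (Finset.mem_erase.mp hk).1
          rw [Finset.sum_congr rfl hterm] at e1
          have h3 := add_right_cancel (e1.trans e2.symm)
          simpa using h3
  · rintro x₀ ⟨hc0, h⟩
    have hmul : ∀ (u v : PowerSeries ℤ) (n : ℕ), coeff (R := ℤ) n (u * v)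
        = ∑ i ∈ Finset.range (n+1), coeff (R := ℤ) i u * coeff (R := ℤ) (n-i) v := by
      intro u v n
      rw [coeff_mul, Finset.Nat.sum_antidiagonal_eq_sum_range_succ_mk]
    have hX : ∀ (c n : ℕ) (u : PowerSeries ℤ),
        coeff (R := ℤ) n ((X : PowerSeries ℤ)^c * u) = if c ≤ n then coeff (R := ℤ) (n-c) u else 0 := by
      intro c n u
      rw [mul_comm, coeff_mul_X_pow']
    have a0 : coeff (R := ℤ) 0 x₀ = -1 := by rwa [coeff_zero_eq_constantCoeff]
    have e1 := h 1
    simp only [Finset.sum_range_succ, Finset.sum_range_zero,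
      show (0:ℕ).choose 2 = 0 by decide, show (1:ℕ).choose 2 = 0 by decide,
      show (2:ℕ).choose 2 = 1 by decide, hX] at e1
    norm_num [pow_succ, hmul, Finset.sum_range_succ, a0] at e1
    have a1 : coeff (R := ℤ) 1 x₀ = -1 := by linarith
    have e2 := h 2
    simp only [Finset.sum_range_succ, Finset.sum_range_zero,
      show (0:ℕ).choose 2 = 0 by decide, show (1:ℕ).choose 2 = 0 by decide,
      show (2:ℕ).choose 2 = 1 by decide, show (3:ℕ).choose 2 = 3 by decide, hX] at e2
    norm_num [pow_succ, hmul, Finset.sum_range_succ, a0, a1] at e2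
    have a2 : coeff (R := ℤ) 2 x₀ = -2 := by linarith
    have e3 := h 3
    simp only [Finset.sum_range_succ, Finset.sum_range_zero,
      show (0:ℕ).choose 2 = 0 by decide, show (1:ℕ).choose 2 = 0 by decide,
      show (2:ℕ).choose 2 = 1 by decide, show (3:ℕ).choose 2 = 3 by decide,
      show (4:ℕ).choose 2 = 6 by decide, hX] at e3
    norm_num [pow_succ, hmul, Finset.sum_range_succ, a0, a1, a2] at e3
    have a3 : coeff (R := ℤ) 3 x₀ = -4 := by linarith
    have e4 := h 4
    simp only [Finset.sum_range_succ, Finset.sum_range_zero,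
      show (0:ℕ).choose 2 = 0 by decide, show (1:ℕ).choose 2 = 0 by decide,
      show (2:ℕ).choose 2 = 1 by decide, show (3:ℕ).choose 2 = 3 by decide,
      show (4:ℕ).choose 2 = 6 by decide, show (5:ℕ).choose 2 = 10 by decide, hX] at e4
    norm_num [pow_succ, hmul, Finset.sum_range_succ, a0, a1, a2, a3] at e4
    have a4 : coeff (R := ℤ) 4 x₀ = -9 := by linarith
    refine ⟨?_, ?_, ?_, ?_, ?_⟩ <;> simp [hc0, a0, a1, a2, a3, a4]
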